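/- Let G(⋆) be a modification of a finite group G, U its group of invertible elements, and I = G(⋆) \ U. Then the ideal I is nilpotent: there exists n ≥ 1 such that every product of n elements of I equals 0. -/

import Mathlib

/-- A modification `G(⋆)` of a group `G`: a semigroup structure on `G⁰ = G ∪ {0}`
(encoded as `WithZero G`) in which the product of two group elements is either their
group product or `0`, `0` is absorbing, and the identity of `G` is an identity. -/
structure Modification (G : Type*) [Group G] where
  mul : WithZero G → WithZero G → WithZero G
  mul_assoc : ∀ x y z, mul (mul x y) z = mul x (mul y z)
  mul_cases : ∀ x y : G, mul (x : WithZero G) (y : WithZero G) = ((x * y : G) : WithZero G)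
      ∨ mul (x : WithZero G) (y : WithZero G) = 0
  zero_mul : ∀ x, mul 0 x = 0
  mul_zero : ∀ x, mul x 0 = 0
  one_mul : ∀ x, mul (1 : WithZero G) x = x
  mul_one : ∀ x, mul x (1 : WithZero G) = x

/-- The set of invertible elements of the monoid `G(⋆)`. -/
def Modification.units {G : Type*} [Group G] (M : Modification G) : Set (WithZero G) :=
  {u | ∃ v, M.mul u v = 1 ∧ M.mul v u = 1}

namespace ModificationProof

variable {G : Type*} [Group G] (M : Modification G)

/-- star-powers of an element, `pw M x k = x ⋆ x ⋆ ⋯ ⋆ x` (k times), `pw M x 0 = 1`. -/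
def pw (x : WithZero G) : ℕ → WithZero G
  | 0 => 1
  | k + 1 => M.mul (pw x k) x

lemma pw_succ' (x : WithZero G) (k : ℕ) : pw M x (k + 1) = M.mul x (pw M x k) := by
  induction k with
  | zero => show M.mul (pw M x 0) x = M.mul x (pw M x 0)
            simp [pw, M.one_mul, M.mul_one]
  | succ k ih =>
      show M.mul (pw M x (k + 1)) x = M.mul x (pw M x (k + 1))
      conv_lhs => rw [ih]
      rw [M.mul_assoc]
      rfl

lemma pw_mul_pw {x a : WithZero G} (h : M.mul x a = 1) :
    ∀ k, M.mul (pw M x k) (pw M a k) = 1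
  | 0 => by simp [pw, M.one_mul]
  | k + 1 => by
      show M.mul (M.mul (pw M x k) x) (pw M a (k + 1)) = 1
      rw [pw_succ', M.mul_assoc, ← M.mul_assoc x a, h, M.one_mul]
      exact pw_mul_pw h k


lemma pw_coe (g : G) : ∀ k, pw M (g : WithZero G) k = 0 ∨
    pw M (g : WithZero G) k = ((g ^ k : G) : WithZero G)
  | 0 => Or.inr (by simp [pw])
  | k + 1 => by
      rcases pw_coe g k with h | h
      · left; show M.mul (pw M _ k) _ = 0; rw [h, M.zero_mul]
      · show M.mul (pw M _ k) _ = 0 ∨ M.mul (pw M _ k) _ = _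
        rw [h]
        rcases M.mul_cases (g ^ k) g with h' | h'
        · right; rw [h', ← pow_succ]
        · left; exact h'

lemma unit_of_pw_ne_zero [Finite G] {x : WithZero G} (h : ∀ k, pw M x k ≠ 0) :
    x ∈ M.units := by
  rcases eq_or_ne x 0 with rfl | hx
  · exact absurd (show pw M 0 1 = 0 from M.mul_zero _) (h 1)
  · obtain ⟨g, rfl⟩ := WithZero.ne_zero_iff_exists.mp hx
    have hm : 0 < orderOf g := orderOf_pos g
    have hpow : pw M (g : WithZero G) (orderOf g) = 1 := by
      rcases pw_coe M g (orderOf g) with h' | h'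
      · exact absurd h' (h _)
      · rw [h', pow_orderOf_eq_one]; rfl
    refine ⟨pw M (g : WithZero G) (orderOf g - 1), ?_, ?_⟩
    · rw [← pw_succ', Nat.sub_add_cancel hm, hpow]
    · show M.mul (pw M _ _) _ = 1
      have : M.mul (pw M (g : WithZero G) (orderOf g - 1)) (g : WithZero G)
          = pw M (g : WithZero G) (orderOf g - 1 + 1) := rfl
      rw [this, Nat.sub_add_cancel hm, hpow]

lemma unit_of_right_inv [Finite G] {x a : WithZero G} (h : M.mul x a = 1) :
    x ∈ M.units := by
  apply unit_of_pw_ne_zero M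
  intro k hk
  have := pw_mul_pw M h k
  rw [hk, M.zero_mul] at this
  exact zero_ne_one this

lemma unit_of_left_inv [Finite G] {x b : WithZero G} (h : M.mul b x = 1) :
    x ∈ M.units := by
  apply unit_of_pw_ne_zero M
  intro k hk
  have := pw_mul_pw M h k
  rw [hk, M.mul_zero] at this
  exact zero_ne_one this

lemma mul_nonunit_left [Finite G] {x : WithZero G} (y : WithZero G) (hx : x ∉ M.units) :
    M.mul x y ∉ M.units := by
  rintro ⟨v, hv1, -⟩
  exact hx (unit_of_right_inv M (show M.mul x (M.mul y v) = 1 by rw [← M.mul_assoc, hv1]))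

lemma foldl_nonunit [Finite G] :
    ∀ (l : List (WithZero G)) {x : WithZero G}, x ∉ M.units →
      l.foldl M.mul x ∉ M.units
  | [], _, hx => hx
  | _ :: t, _, hx => foldl_nonunit t (mul_nonunit_left M _ hx)

lemma foldl_zero : ∀ l : List (WithZero G), l.foldl M.mul 0 = 0
  | [] => rfl
  | c :: t => by show t.foldl M.mul (M.mul 0 c) = 0; rw [M.zero_mul]; exact foldl_zero t

lemma foldl_mul (a : WithZero G) :
    ∀ (l : List (WithZero G)) (b : WithZero G),
      l.foldl M.mul (M.mul a b) = M.mul a (l.foldl M.mul b)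
  | [], b => rfl
  | c :: t, b => by
      show t.foldl M.mul (M.mul (M.mul a b) c) = M.mul a ((c :: t).foldl M.mul b)
      rw [M.mul_assoc, foldl_mul a t (M.mul b c)]
      rfl

lemma absorb {a w : WithZero G} (h : M.mul a w = a) :
    ∀ k, M.mul a (pw M w k) = a
  | 0 => M.mul_one a
  | k + 1 => by
      show M.mul a (M.mul (pw M w k) w) = a
      rw [← M.mul_assoc, absorb h k, h]

end ModificationProof

/-- In a modification of a finite group, the complement `I` of the group of invertible
elements is nilpotent: there is `n ≥ 1` such that every product of `n` elements of `I`
(in any order of association, here the left-normed one) is `0`. -/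
theorem modification_nonunits_nilpotent {G : Type*} [Group G] [Finite G]
    (M : Modification G) :
    ∃ n : ℕ, 1 ≤ n ∧ ∀ (x : WithZero G) (l : List (WithZero G)),
      (x :: l).length = n → x ∉ M.units → (∀ y ∈ l, y ∉ M.units) →
      l.foldl M.mul x = 0 := by
  open ModificationProof in
  refine ⟨Nat.card G + 1, by omega, ?_⟩
  intro x l hlen hx hl
  by_contra hz
  have hlen' : l.length = Nat.card G := by simpa using hlen
  set n := Nat.card G + 1 with hn
  set p : ℕ → WithZero G := fun i => (l.take i).foldl M.mul x with hp
  have hp_ne : ∀ i, p i ≠ 0 := by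
    intro i h0
    apply hz
    conv_lhs => rw [← List.take_append_drop i l]
    rw [List.foldl_append]
    show (l.drop i).foldl M.mul (p i) = 0
    rw [h0, foldl_zero]
  have key : ∀ i j, i < j → j ≤ l.length → p i ≠ p j := by
    intro i j hij hj heq
    set s := (l.take j).drop i with hs
    have hls : l.take j = l.take i ++ s := by
      conv_lhs => rw [← List.take_append_drop i (l.take j)]
      rw [List.take_take, min_eq_left hij.le]
    have hslen : s.length = j - i := by
      rw [hs, List.length_drop, List.length_take, min_eq_left hj]
    have hmem : ∀ y ∈ s, y ∉ M.units := fun y hy =>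
      hl y (List.mem_of_mem_take (List.mem_of_mem_drop hy))
    rcases hsc : s with _ | ⟨c, t⟩
    · rw [hsc] at hslen; simp at hslen; omega
    · rw [hsc] at hmem
      set w := t.foldl M.mul c with hw
      have hwu : w ∉ M.units :=
        foldl_nonunit M t (hmem c (by simp))
      have hpj : p j = M.mul (p i) w := by
        show (l.take j).foldl M.mul x = _
        rw [hls, hsc, List.foldl_append]
        show t.foldl M.mul (M.mul (p i) c) = _
        rw [foldl_mul]
      obtain ⟨k, hk⟩ : ∃ k, pw M w k = 0 := by
        by_contra h; push_neg at h
        exact hwu (unit_of_pw_ne_zero M h)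
      have habs : M.mul (p i) w = p i := by rw [← hpj, heq]
      have := absorb M habs k
      rw [hk, M.mul_zero] at this
      exact hp_ne i this.symm
  have hinj : Function.Injective (fun i : Fin n => WithZero.unzero (hp_ne i)) := by
    intro i j hij
    have hpij : p i = p j := by
      rw [← WithZero.coe_unzero (hp_ne i), ← WithZero.coe_unzero (hp_ne j)]
      exact congrArg _ hij
    rcases lt_trichotomy (i : ℕ) (j : ℕ) with h | h | h
    · exact absurd hpij (key i j h (by have := j.isLt; omega))
    · exact Fin.ext h
    · exact absurd hpij.symm (key j i h (by have := i.isLt; omega))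
  have hcard := Nat.card_le_card_of_injective _ hinj
  simp [Nat.card_eq_fintype_card] at hcard
  omega
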